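/- Let M : ℝ → ℝ be nonnegative and suppose there exist 0 < t₁ < t₂ with M(t₁) < M(t₂). Then there exist real numbers α > 1, A > 0, L > 1 and ε ∈ (0,1) such that, setting ℓ(x) = A·α·cos(x) and w(x) = A·min(cos(x/L), (1/ε)·cos(x)), the following hold: (i) ∫_{−π/2}^{π/2} (ℓ'(x))² dx = t₁ and ∫_{−π/2}^{π/2} (w'(x))² dx = t₂ (where w' denotes the derivative, taken to be 0 at the finitely many points where w is not differentiable); (ii) ℓ(−π/2) = ℓ(π/2) = w(−π/2) = w(π/2) = 0; (iii) for every x ∈ (−π/2, π/2) at which w is twice differentiable, −M(t₁)·ℓ''(x) < −M(t₂)·w''(x); and (iv) ℓ(0) > w(0). In other words, the weak comparison principle fails for the one-dimensional nonlocal operator u ↦ −M(‖u‖²)u'' whenever M is somewhere increasing. -/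

import Mathlib

open Real Set MeasureTheory

/-- Antiderivative of `(k * sin (x/c))^2`. -/
lemma hasDerivAt_aux (k c x : ℝ) (hc : c ≠ 0) :
    HasDerivAt (fun y => k^2*c/2 * (y/c - sin (y/c) * cos (y/c)))
      ((k * sin (x/c))^2) x := by
  have h1 : HasDerivAt (fun y : ℝ => y / c) (1/c) x := (hasDerivAt_id x).div_const c |>.congr_deriv (by ring)
  have hs : HasDerivAt (fun y : ℝ => sin (y/c)) (cos (x/c) * (1/c)) x :=
    by have := (Real.hasDerivAt_sin (x/c)).comp x h1; exact this
  have hcc : HasDerivAt (fun y : ℝ => cos (y/c)) (-sin (x/c) * (1/c)) x :=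
    by have := (Real.hasDerivAt_cos (x/c)).comp x h1; exact this
  have h : HasDerivAt (fun y => k^2*c/2 * (y/c - sin (y/c) * cos (y/c)))
      (k^2*c/2 * (1/c - (cos (x/c) * (1/c) * cos (x/c) + sin (x/c) * (-sin (x/c) * (1/c))))) x :=
    ((h1.sub (hs.mul hcc))).const_mul _
  convert h using 1
  have := sin_sq_add_cos_sq (x/c)
  field_simp
  linear_combination (k^2) * this

lemma integral_aux (k c a b : ℝ) (hc : c ≠ 0) :
    ∫ x in a..b, (k * sin (x/c))^2
      = k^2*c/2 * ((b/c - sin (b/c) * cos (b/c)) - (a/c - sin (a/c) * cos (a/c))) := by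
  rw [intervalIntegral.integral_eq_sub_of_hasDerivAt
    (fun x _ => hasDerivAt_aux k c x hc) (by apply Continuous.intervalIntegrable; continuity)]
  ring


lemma phi_anti {L : ℝ} (hL : 1 < L) :
    StrictAntiOn (fun x => cos x / cos (x / L)) (Icc 0 (π/2)) := by
  have hL0 : 0 < L := lt_trans one_pos hL
  have hdivle : ∀ x : ℝ, 0 ≤ x → x / L ≤ x := by
    intro x hx; rw [div_le_iff₀ hL0]; nlinarith
  have hcosL : ∀ x ∈ Icc 0 (π/2), 0 < cos (x / L) := by
    intro x hx
    apply cos_pos_of_mem_Ioo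
    have h0 : 0 ≤ x / L := div_nonneg hx.1 hL0.le
    have h2 : x / L < π/2 := by
      calc x / L ≤ (π/2) / L := by apply div_le_div_of_nonneg_right hx.2 hL0.le
        _ < π/2 := by rw [div_lt_iff₀ hL0]; nlinarith [pi_pos]
    exact ⟨by linarith [pi_pos], h2⟩
  apply strictAntiOn_of_deriv_neg (convex_Icc _ _)
  · apply ContinuousOn.div (Real.continuous_cos.continuousOn)
    · exact (Real.continuous_cos.comp (continuous_id.div_const L)).continuousOn
    · intro x hx; exact (hcosL x hx).ne'
  · intro x hx
    rw [interior_Icc] at hx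
    have hx2 : x ∈ Icc 0 (π/2) := Ioo_subset_Icc_self hx
    have h1 : HasDerivAt (fun y : ℝ => y / L) (1/L) x := by
      simpa using (hasDerivAt_id x).div_const L
    have hcc : HasDerivAt (fun y : ℝ => cos (y / L)) (-sin (x/L) * (1/L)) x :=
      by have := (Real.hasDerivAt_cos (x/L)).comp x h1; exact this
    have hd : HasDerivAt (fun y => cos y / cos (y / L))
        ((-sin x * cos (x/L) - cos x * (-sin (x/L) * (1/L))) / cos (x/L)^2) x :=
      (Real.hasDerivAt_cos x).div hcc (hcosL x hx2).ne'
    rw [hd.deriv]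
    have hcLpos := hcosL x hx2
    apply div_neg_of_neg_of_pos _ (by positivity)
    have hxL0 : 0 ≤ x / L := div_nonneg hx.1.le hL0.le
    have hsx : sin (x/L) < sin x := by
      apply strictMonoOn_sin ⟨by linarith [pi_pos], le_trans (hdivle x hx.1.le) hx.2.le⟩
        ⟨by linarith [hx.1, pi_pos], hx.2.le⟩
      rw [div_lt_iff₀ hL0]; nlinarith [hx.1]
    have hsxpos : 0 ≤ sin (x/L) :=
      sin_nonneg_of_nonneg_of_le_pi hxL0 (by linarith [le_trans (hdivle x hx.1.le) hx.2.le, pi_pos])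
    have hcx' : 0 ≤ cos x := cos_nonneg_of_mem_Icc ⟨by linarith [hx.1, pi_pos], hx.2.le⟩
    have hsinxpos : 0 < sin x := sin_pos_of_pos_of_lt_pi hx.1 (by linarith [hx.2, pi_pos])
    have h1L : 1/L < 1 := by rw [div_lt_one hL0]; exact hL
    have h : cos x ≤ cos (x/L) :=
      cos_le_cos_of_nonneg_of_le_pi hxL0 (by linarith [hx.2, pi_pos]) (hdivle x hx.1.le)
    nlinarith [mul_pos hcLpos (sub_pos.2 hsx), mul_nonneg (sub_nonneg.2 h) hsxpos,
      mul_nonneg (mul_nonneg hcx' hsxpos) (sub_nonneg.2 h1L.le)]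


section Branch
variable {L x₀ ε : ℝ}

lemma cosx₀_pos (hx₀ : x₀ ∈ Ioo 0 (π/2)) : 0 < cos x₀ :=
  cos_pos_of_mem_Ioo ⟨by linarith [hx₀.1, pi_pos], hx₀.2⟩

lemma cosx₀L_pos (hL : 1 < L) (hx₀ : x₀ ∈ Ioo 0 (π/2)) : 0 < cos (x₀ / L) := by
  have hL0 : 0 < L := lt_trans one_pos hL
  apply cos_pos_of_mem_Ioo
  constructor
  · have : 0 ≤ x₀ / L := div_nonneg hx₀.1.le hL0.le
    linarith [pi_pos]
  · calc x₀ / L ≤ x₀ := by rw [div_le_iff₀ hL0]; nlinarith [hx₀.1]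
      _ < π/2 := hx₀.2

lemma eps_pos (hL : 1 < L) (hx₀ : x₀ ∈ Ioo 0 (π/2)) (hε : ε = cos x₀ / cos (x₀ / L)) : 0 < ε := hε ▸ div_pos (cosx₀_pos hx₀) (cosx₀L_pos hL hx₀)

lemma eps_lt_one (hL : 1 < L) (hx₀ : x₀ ∈ Ioo 0 (π/2)) (hε : ε = cos x₀ / cos (x₀ / L)) : ε < 1 := by
  have h := phi_anti hL (left_mem_Icc.2 (by linarith [pi_pos])) 
    ⟨hx₀.1.le, hx₀.2.le⟩ hx₀.1
  simp only [cos_zero, zero_div] at h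
  rw [hε]
  simpa using h

/-- branch identification on a symmetric interval -/
lemma branch1 (hL : 1 < L) (hx₀ : x₀ ∈ Ioo 0 (π/2)) (hε : ε = cos x₀ / cos (x₀ / L)) : ∀ x : ℝ, |x| < x₀ → cos (x / L) < (1/ε) * cos x := by
  intro x hx
  have hL0 : 0 < L := lt_trans one_pos hL
  have he : 0 < ε := eps_pos hL hx₀ hε
  have habs : |x| / L = |x / L| := by rw [abs_div, abs_of_pos hL0]
  rw [← cos_abs x, ← cos_abs (x/L), ← habs]
  set y := |x| with hy
  have hy0 : 0 ≤ y := abs_nonneg x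
  have hphi := phi_anti hL (⟨hy0, by linarith [hx₀.2]⟩ : y ∈ Icc 0 (π/2))
    ⟨hx₀.1.le, hx₀.2.le⟩ hx
  simp only at hphi
  rw [← hε] at hphi
  -- hphi : ε < cos y / cos (y / L)
  have hcyL : 0 < cos (y / L) := by
    apply cos_pos_of_mem_Ioo
    constructor
    · have : 0 ≤ y / L := div_nonneg hy0 hL0.le
      linarith [pi_pos]
    · calc y / L ≤ y := by rw [div_le_iff₀ hL0]; nlinarith
        _ < π/2 := by linarith [hx₀.2]
  rw [lt_div_iff₀ hcyL] at hphi
  rw [one_div, ← div_eq_inv_mul, lt_div_iff₀' he]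
  linarith [hphi]

lemma branch2 (hL : 1 < L) (hx₀ : x₀ ∈ Ioo 0 (π/2)) (hε : ε = cos x₀ / cos (x₀ / L)) : ∀ x : ℝ, x₀ < |x| → |x| ≤ π/2 → (1/ε) * cos x < cos (x / L) := by
  intro x hx hx2
  have hL0 : 0 < L := lt_trans one_pos hL
  have he : 0 < ε := eps_pos hL hx₀ hε
  have habs : |x| / L = |x / L| := by rw [abs_div, abs_of_pos hL0]
  rw [← cos_abs x, ← cos_abs (x/L), ← habs]
  set y := |x| with hy
  have hy0 : 0 ≤ y := abs_nonneg x
  have hphi := phi_anti hL (⟨hx₀.1.le, hx₀.2.le⟩ : x₀ ∈ Icc 0 (π/2))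
    ⟨hy0, hx2⟩ hx
  simp only at hphi
  rw [← hε] at hphi
  have hcyL : 0 < cos (y / L) := by
    apply cos_pos_of_mem_Ioo
    constructor
    · have : 0 ≤ y / L := div_nonneg hy0 hL0.le
      linarith [pi_pos]
    · calc y / L ≤ (π/2) / L := div_le_div_of_nonneg_right hx2 hL0.le
        _ < π/2 := by rw [div_lt_iff₀ hL0]; nlinarith [pi_pos]
  rw [div_lt_iff₀ hcyL] at hphi
  rw [one_div, ← div_eq_inv_mul, div_lt_iff₀' he]
  linarith [hphi]

end Branch


section W
variable {L x₀ ε : ℝ}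

noncomputable def Wf (L ε : ℝ) : ℝ → ℝ := fun x => min (cos (x/L)) ((1/ε) * cos x)

lemma W_eq1 (hL : 1 < L) (hx₀ : x₀ ∈ Ioo 0 (π/2)) (hε : ε = cos x₀ / cos (x₀ / L)) :
    ∀ x : ℝ, |x| < x₀ → Wf L ε x = cos (x / L) := fun x hx =>
  min_eq_left (branch1 hL hx₀ hε x hx).le

lemma W_eq2 (hL : 1 < L) (hx₀ : x₀ ∈ Ioo 0 (π/2)) (hε : ε = cos x₀ / cos (x₀ / L)) :
    ∀ x : ℝ, x₀ < |x| → |x| ≤ π/2 → Wf L ε x = (1/ε) * cos x := fun x hx hx2 =>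
  min_eq_right (branch2 hL hx₀ hε x hx hx2).le

lemma isOpen_S1 : IsOpen {x : ℝ | |x| < x₀} := isOpen_Iio.preimage continuous_abs

lemma isOpen_S2 : IsOpen {x : ℝ | x₀ < |x| ∧ |x| < π/2} := by
  have : {x : ℝ | x₀ < |x| ∧ |x| < π/2} = abs ⁻¹' (Ioo x₀ (π/2)) := rfl
  rw [this]; exact isOpen_Ioo.preimage continuous_abs

lemma hasDerivAt_b1 (hL : 1 < L) (x : ℝ) :
    HasDerivAt (fun y => cos (y / L)) (-(sin (x/L) / L)) x := by
  have h1 : HasDerivAt (fun y : ℝ => y / L) (1/L) x := by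
    simpa using (hasDerivAt_id x).div_const L
  have := (Real.hasDerivAt_cos (x/L)).comp x h1
  exact this.congr_deriv (by ring)

lemma hasDerivAt_b2 (ε : ℝ) (x : ℝ) :
    HasDerivAt (fun y => (1/ε) * cos y) (-((1/ε) * sin x)) x := by
  have := (Real.hasDerivAt_cos x).const_mul (1/ε)
  exact this.congr_deriv (by ring)

lemma W_deriv1 (hL : 1 < L) (hx₀ : x₀ ∈ Ioo 0 (π/2)) (hε : ε = cos x₀ / cos (x₀ / L)) :
    ∀ x : ℝ, |x| < x₀ → deriv (Wf L ε) x = -(sin (x/L) / L) := by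
  intro x hx
  have hev : Wf L ε =ᶠ[nhds x] (fun y => cos (y / L)) := by
    filter_upwards [isOpen_S1.mem_nhds hx] with y hy
    exact W_eq1 hL hx₀ hε y hy
  rw [hev.deriv_eq, (hasDerivAt_b1 hL x).deriv]

lemma W_deriv2 (hL : 1 < L) (hx₀ : x₀ ∈ Ioo 0 (π/2)) (hε : ε = cos x₀ / cos (x₀ / L)) :
    ∀ x : ℝ, x₀ < |x| → |x| < π/2 → deriv (Wf L ε) x = -((1/ε) * sin x) := by
  intro x hx hx2
  have hev : Wf L ε =ᶠ[nhds x] (fun y => (1/ε) * cos y) := by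
    filter_upwards [isOpen_S2.mem_nhds ⟨hx, hx2⟩] with y hy
    exact W_eq2 hL hx₀ hε y hy.1 hy.2.le
  rw [hev.deriv_eq, (hasDerivAt_b2 ε x).deriv]

end W



section W
variable {L x₀ ε : ℝ}

lemma W_even (hL : 1 < L) (x : ℝ) : Wf L ε (-x) = Wf L ε x := by
  unfold Wf; rw [neg_div, cos_neg, cos_neg]

lemma W_val (hL : 1 < L) (hx₀ : x₀ ∈ Ioo 0 (π/2)) (hε : ε = cos x₀ / cos (x₀ / L)) :
    (1/ε) * cos x₀ = cos (x₀/L) := by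
  have hcx₀ : cos x₀ ≠ 0 :=
    (cos_pos_of_mem_Ioo ⟨by linarith [hx₀.1, pi_pos], hx₀.2⟩).ne'
  rw [hε]
  field_simp

lemma W_eq1e (hL : 1 < L) (hx₀ : x₀ ∈ Ioo 0 (π/2)) (hε : ε = cos x₀ / cos (x₀ / L)) :
    ∀ x : ℝ, |x| ≤ x₀ → Wf L ε x = cos (x / L) := by
  intro x hx
  rcases lt_or_eq_of_le hx with h | h
  · exact W_eq1 hL hx₀ hε x h
  · have hcx : cos (x/L) = cos (x₀/L) := by
      rw [← cos_abs (x/L), abs_div, abs_of_pos (lt_trans one_pos hL), h]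
    have hcx2 : cos x = cos x₀ := by rw [← cos_abs x, h]
    unfold Wf
    rw [hcx2, hcx, W_val hL hx₀ hε, min_self]

lemma W_eq2e (hL : 1 < L) (hx₀ : x₀ ∈ Ioo 0 (π/2)) (hε : ε = cos x₀ / cos (x₀ / L)) :
    ∀ x : ℝ, x₀ ≤ |x| → |x| ≤ π/2 → Wf L ε x = (1/ε) * cos x := by
  intro x hx hx2
  rcases lt_or_eq_of_le hx with h | h
  · exact W_eq2 hL hx₀ hε x h hx2
  · have hcx : cos (x/L) = cos (x₀/L) := by
      rw [← cos_abs (x/L), abs_div, abs_of_pos (lt_trans one_pos hL), ← h]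
    have hcx2 : cos x = cos x₀ := by rw [← cos_abs x, ← h]
    unfold Wf
    rw [hcx2, hcx, W_val hL hx₀ hε, min_self]

lemma W_hdw1 (hL : 1 < L) (hx₀ : x₀ ∈ Ioo 0 (π/2)) (hε : ε = cos x₀ / cos (x₀ / L)) :
    HasDerivWithinAt (Wf L ε) (-(sin (x₀/L) / L)) (Iic x₀) x₀ := by
  apply ((hasDerivAt_b1 hL x₀).hasDerivWithinAt).congr_of_eventuallyEq
  · have hmem : Ioi (-x₀) ∈ nhdsWithin x₀ (Iic x₀) :=
      nhdsWithin_le_nhds (isOpen_Ioi.mem_nhds (by simp only [mem_Ioi]; linarith [hx₀.1]))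
    filter_upwards [hmem, self_mem_nhdsWithin] with y hy1 hy2
    exact W_eq1e hL hx₀ hε y (abs_le.2 ⟨le_of_lt hy1, hy2⟩)
  · exact W_eq1e hL hx₀ hε x₀ (by rw [abs_of_pos hx₀.1])

lemma W_hdw2 (hL : 1 < L) (hx₀ : x₀ ∈ Ioo 0 (π/2)) (hε : ε = cos x₀ / cos (x₀ / L)) :
    HasDerivWithinAt (Wf L ε) (-((1/ε) * sin x₀)) (Ici x₀) x₀ := by
  apply ((hasDerivAt_b2 ε x₀).hasDerivWithinAt).congr_of_eventuallyEq
  · have hmem : Iio (π/2) ∈ nhdsWithin x₀ (Ici x₀) :=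
      nhdsWithin_le_nhds (isOpen_Iio.mem_nhds hx₀.2)
    filter_upwards [hmem, self_mem_nhdsWithin] with y hy1 hy2
    have hy0 : (0:ℝ) < y := lt_of_lt_of_le hx₀.1 hy2
    exact W_eq2e hL hx₀ hε y (by rw [abs_of_pos hy0]; exact hy2) (by rw [abs_of_pos hy0]; exact le_of_lt hy1)
  · exact W_eq2e hL hx₀ hε x₀ (by rw [abs_of_pos hx₀.1]) (by rw [abs_of_pos hx₀.1]; exact hx₀.2.le)

lemma W_deriv_ne (hL : 1 < L) (hx₀ : x₀ ∈ Ioo 0 (π/2)) (hε : ε = cos x₀ / cos (x₀ / L)) :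
    sin (x₀/L) / L < (1/ε) * sin x₀ := by
  have hL0 : 0 < L := lt_trans one_pos hL
  have hcx₀ : 0 < cos x₀ := cos_pos_of_mem_Ioo ⟨by linarith [hx₀.1, pi_pos], hx₀.2⟩
  have hcL : 0 < cos (x₀/L) := cosx₀L_pos hL hx₀
  have hs : 0 < sin x₀ := sin_pos_of_pos_of_lt_pi hx₀.1 (by linarith [hx₀.2, pi_pos])
  have hss : sin (x₀/L) < sin x₀ := by
    apply strictMonoOn_sin
    · constructor
      · have : 0 ≤ x₀ / L := div_nonneg hx₀.1.le hL0.le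
        linarith [pi_pos]
      · calc x₀/L ≤ x₀ := by rw [div_le_iff₀ hL0]; nlinarith [hx₀.1]
          _ ≤ π/2 := hx₀.2.le
    · exact ⟨by linarith [hx₀.1, pi_pos], hx₀.2.le⟩
    · rw [div_lt_iff₀ hL0]; nlinarith [hx₀.1]
  have hcc : cos x₀ ≤ cos (x₀/L) := by
    apply cos_le_cos_of_nonneg_of_le_pi (div_nonneg hx₀.1.le hL0.le)
      (by linarith [hx₀.2, pi_pos])
    rw [div_le_iff₀ hL0]; nlinarith [hx₀.1]
  have he : (1/ε) * sin x₀ = cos (x₀/L) * sin x₀ / cos x₀ := by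
    rw [hε]; field_simp
  rw [he, div_lt_iff₀ hL0, div_mul_eq_mul_div, lt_div_iff₀ hcx₀]
  nlinarith [mul_lt_mul_of_pos_right hss hcx₀, mul_le_mul_of_nonneg_left hcc hs.le,
    mul_nonneg (mul_nonneg hs.le hcL.le) (sub_nonneg.2 hL.le)]

lemma W_not_diff (hL : 1 < L) (hx₀ : x₀ ∈ Ioo 0 (π/2)) (hε : ε = cos x₀ / cos (x₀ / L)) :
    ¬ DifferentiableAt ℝ (Wf L ε) x₀ := by
  intro h
  have hu : UniqueDiffWithinAt ℝ (Iic x₀) x₀ := uniqueDiffOn_Iic x₀ x₀ self_mem_Iic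
  have hu2 : UniqueDiffWithinAt ℝ (Ici x₀) x₀ := uniqueDiffOn_Ici x₀ x₀ self_mem_Ici
  have e1 := (W_hdw1 hL hx₀ hε).derivWithin hu
  have e1' := (h.hasDerivAt.hasDerivWithinAt (s := Iic x₀)).derivWithin hu
  have e2 := (W_hdw2 hL hx₀ hε).derivWithin hu2
  have e2' := (h.hasDerivAt.hasDerivWithinAt (s := Ici x₀)).derivWithin hu2
  have : -(sin (x₀/L) / L) = -((1/ε) * sin x₀) := by rw [← e1, e1', ← e2', e2]
  have hne := W_deriv_ne hL hx₀ hε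
  linarith

lemma W_not_diff_neg (hL : 1 < L) (hx₀ : x₀ ∈ Ioo 0 (π/2)) (hε : ε = cos x₀ / cos (x₀ / L)) :
    ¬ DifferentiableAt ℝ (Wf L ε) (-x₀) := by
  intro h
  apply W_not_diff hL hx₀ hε
  have hneg : DifferentiableAt ℝ (fun x => Wf L ε (-x)) x₀ := by
    exact h.comp x₀ (differentiableAt_id.neg)
  have : (fun x => Wf L ε (-x)) = Wf L ε := funext fun x => W_even hL x
  rwa [this] at hneg

end W


lemma piece_aux {f g : ℝ → ℝ} {a b : ℝ} (hab : a ≤ b) (hg : Continuous g)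
    (h : ∀ x ∈ Ioo a b, f x = g x) :
    IntervalIntegrable f volume a b ∧ (∫ x in a..b, f x) = ∫ x in a..b, g x := by
  have hb : ∀ᵐ x : ℝ, x ≠ b := by
    have : (volume : Measure ℝ) {b} = 0 := Real.volume_singleton
    filter_upwards [MeasureTheory.measure_eq_zero_iff_ae_notMem.mp this] with x hx
    simpa using hx
  have hae : ∀ᵐ x : ℝ, x ∈ Ioc a b → f x = g x := by
    filter_upwards [hb] with x hx hmem
    exact h x ⟨hmem.1, lt_of_le_of_ne hmem.2 hx⟩
  constructor
  · rw [intervalIntegrable_iff_integrableOn_Ioc_of_le hab]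
    apply (hg.integrableOn_Ioc).congr
    apply (ae_restrict_iff' measurableSet_Ioc).2
    filter_upwards [hae] with x hx hmem
    exact (hx hmem).symm
  · apply intervalIntegral.integral_congr_ae
    rwa [Set.uIoc_of_le hab]


section More
variable {L x₀ ε : ℝ}

lemma W_deriv2nd1 (hL : 1 < L) (hx₀ : x₀ ∈ Ioo 0 (π/2)) (hε : ε = cos x₀ / cos (x₀ / L)) :
    ∀ x : ℝ, |x| < x₀ → deriv (deriv (Wf L ε)) x = -(cos (x/L) / L^2) := by
  intro x hx
  have hev : deriv (Wf L ε) =ᶠ[nhds x] (fun y => -(sin (y/L) / L)) := by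
    filter_upwards [isOpen_S1.mem_nhds hx] with y hy
    exact W_deriv1 hL hx₀ hε y hy
  rw [hev.deriv_eq]
  have h1 : HasDerivAt (fun y : ℝ => -(sin (y/L) / L)) (-(cos (x/L) / L^2)) x := by
    have h2 : HasDerivAt (fun y : ℝ => y / L) (1/L) x := by
      simpa using (hasDerivAt_id x).div_const L
    have := (((Real.hasDerivAt_sin (x/L)).comp x h2).div_const L).neg
    exact this.congr_deriv (by ring)
  exact h1.deriv

lemma W_deriv2nd2 (hL : 1 < L) (hx₀ : x₀ ∈ Ioo 0 (π/2)) (hε : ε = cos x₀ / cos (x₀ / L)) :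
    ∀ x : ℝ, x₀ < |x| → |x| < π/2 → deriv (deriv (Wf L ε)) x = -((1/ε) * cos x) := by
  intro x hx hx2
  have hev : deriv (Wf L ε) =ᶠ[nhds x] (fun y => -((1/ε) * sin y)) := by
    filter_upwards [isOpen_S2.mem_nhds ⟨hx, hx2⟩] with y hy
    exact W_deriv2 hL hx₀ hε y hy.1 hy.2
  rw [hev.deriv_eq]
  have h1 : HasDerivAt (fun y : ℝ => -((1/ε) * sin y)) (-((1/ε) * cos x)) x :=
    ((Real.hasDerivAt_sin x).const_mul (1/ε)).neg
  exact h1.deriv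

noncomputable def JJ (L : ℝ) : ℝ → ℝ := fun s =>
  (1/L) * (s/L - sin (s/L) * cos (s/L)) + (cos (s/L) / cos s)^2 * (π/2 - s + sin s * cos s)

lemma W_integral (hL : 1 < L) (hx₀ : x₀ ∈ Ioo 0 (π/2)) (hε : ε = cos x₀ / cos (x₀ / L)) :
    (∫ x in (-(π/2))..(π/2), (deriv (Wf L ε) x)^2) = JJ L x₀ := by
  have hL0 : 0 < L := lt_trans one_pos hL
  have hP1 := piece_aux (f := fun x => (deriv (Wf L ε) x)^2)
    (g := fun x => ((1/ε) * sin (x/1))^2) (a := -(π/2)) (b := -x₀)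
    (by linarith [hx₀.1, hx₀.2]) (by continuity) (by
      intro x hx
      have hxabs : |x| = -x := abs_of_neg (by linarith [hx.2, hx₀.1])
      show (deriv (Wf L ε) x)^2 = ((1/ε) * sin (x/1))^2
      rw [W_deriv2 hL hx₀ hε x (by rw [hxabs]; linarith [hx.2]) (by rw [hxabs]; linarith [hx.1])]
      norm_num)
  have hP2 := piece_aux (f := fun x => (deriv (Wf L ε) x)^2)
    (g := fun x => ((1/L) * sin (x/L))^2) (a := -x₀) (b := x₀)
    (by linarith [hx₀.1]) (by continuity) (by
      intro x hx
      show (deriv (Wf L ε) x)^2 = ((1/L) * sin (x/L))^2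
      rw [W_deriv1 hL hx₀ hε x (abs_lt.2 ⟨hx.1, hx.2⟩)]
      ring)
  have hP3 := piece_aux (f := fun x => (deriv (Wf L ε) x)^2)
    (g := fun x => ((1/ε) * sin (x/1))^2) (a := x₀) (b := π/2)
    (by linarith [hx₀.2]) (by continuity) (by
      intro x hx
      have hxabs : |x| = x := abs_of_pos (by linarith [hx.1, hx₀.1])
      show (deriv (Wf L ε) x)^2 = ((1/ε) * sin (x/1))^2
      rw [W_deriv2 hL hx₀ hε x (by rw [hxabs]; exact hx.1) (by rw [hxabs]; exact hx.2)]
      norm_num)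
  have hsplit1 := intervalIntegral.integral_add_adjacent_intervals
    (μ := volume) (f := fun x => (deriv (Wf L ε) x)^2) hP1.1 hP2.1
  have hsplit2 := intervalIntegral.integral_add_adjacent_intervals
    (μ := volume) (f := fun x => (deriv (Wf L ε) x)^2) (hP1.1.trans hP2.1) hP3.1
  rw [← hsplit2, ← hsplit1, hP1.2, hP2.2, hP3.2,
    integral_aux (1/ε) 1 (-(π/2)) (-x₀) one_ne_zero,
    integral_aux (1/L) L (-x₀) x₀ hL0.ne',
    integral_aux (1/ε) 1 x₀ (π/2) one_ne_zero]
  have he : (1/ε) = cos (x₀/L) / cos x₀ := by rw [hε, one_div_div]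
  unfold JJ
  rw [he]
  simp only [div_one, neg_div, sin_neg, cos_neg, sin_pi_div_two, cos_pi_div_two]
  field_simp
  ring

end More

lemma JJ_zero (L : ℝ) : JJ L 0 = π/2 := by
  simp [JJ]

lemma JJ_cont {L b : ℝ} (hL : 1 < L) (hb : b < π/2) : ContinuousOn (JJ L) (Icc 0 b) := by
  have hcos : ∀ x ∈ Icc (0:ℝ) b, cos x ≠ 0 := by
    intro x hx
    exact (cos_pos_of_mem_Ioo ⟨by linarith [hx.1, pi_pos], lt_of_le_of_lt hx.2 hb⟩).ne'
  apply ContinuousOn.add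
  · exact (by continuity : Continuous fun s : ℝ => (1/L) * (s/L - sin (s/L) * cos (s/L))).continuousOn
  · apply ContinuousOn.mul
    · apply ContinuousOn.pow
      exact ContinuousOn.div
        ((by continuity : Continuous fun s : ℝ => cos (s/L)).continuousOn)
        (Real.continuous_cos.continuousOn) hcos
    · exact (by continuity : Continuous fun s : ℝ => π/2 - s + sin s * cos s).continuousOn

lemma JJ_lb {L : ℝ} (hL : 1 < L) {δ : ℝ} (hδ : 0 < δ) (hδ2 : δ ≤ π/4) :
    cos (π/(2*L))^2 / δ - 1 ≤ JJ L (π/2 - δ) := by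
  have hL0 : 0 < L := lt_trans one_pos hL
  obtain ⟨s, hs⟩ : ∃ s, s = π/2 - δ := ⟨_, rfl⟩
  rw [← hs]
  have hπ := pi_pos
  have hs0 : 0 ≤ s := by rw [hs]; linarith
  have hsπ : s < π/2 := by rw [hs]; linarith
  have hsL0 : 0 ≤ s / L := div_nonneg hs0 hL0.le
  have hsLs : s / L ≤ s := by rw [div_le_iff₀ hL0]; nlinarith
  -- term 1 ≥ -1
  have h1 : -1 ≤ (1/L) * (s/L - sin (s/L) * cos (s/L)) := by
    have hsin : 0 ≤ sin (s/L) := sin_nonneg_of_nonneg_of_le_pi hsL0 (by linarith)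
    have hsin1 : sin (s/L) ≤ 1 := sin_le_one _
    have hcos1 : cos (s/L) ≤ 1 := cos_le_one _
    have h1L : 1/L ≤ 1 := by rw [div_le_one hL0]; linarith
    have h1L0 : 0 < 1/L := by positivity
    nlinarith [mul_nonneg hsin (sub_nonneg.2 hcos1)]
  -- term 2 bound
  have hcs : cos s = sin δ := by rw [hs, Real.cos_pi_div_two_sub]
  have hcspos : 0 < cos s := by
    rw [hcs]; exact sin_pos_of_pos_of_lt_pi hδ (by linarith)
  have hcsδ : cos s ≤ δ := by rw [hcs]; exact Real.sin_le hδ.le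
  have hsLb : s / L ≤ π/(2*L) := by
    rw [div_le_div_iff₀ hL0 (by linarith : (0:ℝ) < 2*L)]
    nlinarith [mul_le_mul_of_nonneg_right hsπ.le (by linarith : (0:ℝ) ≤ 2*L)]
  have hcLb : cos (π/(2*L)) ≤ cos (s/L) := by
    apply cos_le_cos_of_nonneg_of_le_pi hsL0 _ hsLb
    calc π/(2*L) ≤ π/2 := by
          apply div_le_div_of_nonneg_left hπ.le (by linarith) (by linarith)
      _ ≤ π := by linarith
  have hcpos : 0 < cos (π/(2*L)) := by
    apply cos_pos_of_mem_Ioo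
    constructor
    · have : 0 < π/(2*L) := by positivity
      linarith
    · rw [div_lt_div_iff₀ (by linarith) (by linarith)]; nlinarith
  have hq : cos (π/(2*L)) / δ ≤ cos (s/L) / cos s :=
    div_le_div₀ (le_trans hcpos.le hcLb) hcLb hcspos hcsδ
  have hq2 : (cos (π/(2*L)) / δ)^2 ≤ (cos (s/L) / cos s)^2 := by
    apply pow_le_pow_left₀ (by positivity) hq
  have hfac : δ ≤ π/2 - s + sin s * cos s := by
    have : 0 ≤ sin s * cos s := mul_nonneg (sin_nonneg_of_nonneg_of_le_pi hs0 (by linarith)) hcspos.le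
    linarith
  have h2 : (cos (π/(2*L)))^2 / δ ≤ (cos (s/L) / cos s)^2 * (π/2 - s + sin s * cos s) := by
    calc (cos (π/(2*L)))^2 / δ = (cos (π/(2*L)) / δ)^2 * δ := by
          field_simp
      _ ≤ (cos (s/L) / cos s)^2 * (π/2 - s + sin s * cos s) := by
          apply mul_le_mul hq2 hfac hδ.le (by positivity)
  unfold JJ
  linarith


set_option maxHeartbeats 2000000 in
/-- Failure of the weak comparison principle for the one-dimensional nonlocal
operator `u ↦ −M(‖u‖²)u''` when `M` is somewhere increasing. -/
theorem stmt_2 (M : ℝ → ℝ) (hM : ∀ t, 0 ≤ M t) (t₁ t₂ : ℝ)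
    (ht₁ : 0 < t₁) (ht₁₂ : t₁ < t₂) (hMt : M t₁ < M t₂) :
    ∃ α A L ε : ℝ, 1 < α ∧ 0 < A ∧ 1 < L ∧ 0 < ε ∧ ε < 1 ∧
      ∀ ℓ w : ℝ → ℝ,
        ℓ = (fun x => A * α * Real.cos x) →
        w = (fun x => A * min (Real.cos (x / L)) ((1 / ε) * Real.cos x)) →
        -- (i) the squared H¹₀-norms are t₁ and t₂
        ((∫ x in (-(π / 2))..(π / 2), (deriv ℓ x) ^ 2) = t₁ ∧
          (∫ x in (-(π / 2))..(π / 2), (deriv w x) ^ 2) = t₂) ∧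
        -- (ii) boundary values
        (ℓ (-(π / 2)) = 0 ∧ ℓ (π / 2) = 0 ∧ w (-(π / 2)) = 0 ∧ w (π / 2) = 0) ∧
        -- (iii) strict inequality between the operators where w is twice differentiable
        (∀ x ∈ Set.Ioo (-(π / 2)) (π / 2),
          DifferentiableAt ℝ w x → DifferentiableAt ℝ (deriv w) x →
          -(M t₁) * deriv (deriv ℓ) x < -(M t₂) * deriv (deriv w) x) ∧
        -- (iv) yet ℓ exceeds w at the interior point 0
        ℓ 0 > w 0 := by
  have hπ := pi_pos
  have hM1 : 0 ≤ M t₁ := hM t₁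
  have hM2 : 0 ≤ M t₂ := hM t₂
  have ht₂ : 0 < t₂ := lt_trans ht₁ ht₁₂
  obtain ⟨r', hr'⟩ : ∃ r' : ℝ, r' = if M t₁ = 0 then 2 else min (M t₂ / M t₁) 2 := ⟨_, rfl⟩
  have hr'1 : 1 < r' := by
    rw [hr']; split_ifs with h
    · norm_num
    · have hp : 0 < M t₁ := lt_of_le_of_ne hM1 (Ne.symm h)
      exact lt_min ((one_lt_div hp).2 hMt) one_lt_two
  have hMr' : M t₁ * r' ≤ M t₂ := by
    rw [hr']; split_ifs with h
    · rw [h]; simpa using hM2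
    · have hp : 0 < M t₁ := lt_of_le_of_ne hM1 (Ne.symm h)
      calc M t₁ * min (M t₂ / M t₁) 2 ≤ M t₁ * (M t₂ / M t₁) :=
            mul_le_mul_of_nonneg_left (min_le_left _ _) hM1
        _ = M t₂ := by field_simp
  obtain ⟨L, hLdef⟩ : ∃ L : ℝ, L = Real.sqrt ((1 + r')/2) := ⟨_, rfl⟩
  have hL2 : L^2 = (1 + r')/2 := by rw [hLdef]; exact Real.sq_sqrt (by linarith)
  have hL : 1 < L := by
    have := (Real.lt_sqrt (by linarith : (0:ℝ) ≤ 1)).2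
      (by nlinarith : (1:ℝ)^2 < (1+r')/2)
    rwa [hLdef]
  have hL0 : 0 < L := lt_trans one_pos hL
  have hL2pos : 0 < L^2 := by positivity
  have hL2gt1 : 1 < L^2 := by nlinarith
  obtain ⟨α, hαdef⟩ : ∃ α : ℝ, α = (1 + r'/L^2)/2 := ⟨_, rfl⟩
  have hL2r : L^2 < r' := by rw [hL2]; linarith
  have hα1 : 1 < α := by
    rw [hαdef]
    have : 1 < r'/L^2 := (one_lt_div hL2pos).2 hL2r
    linarith
  have hα0 : 0 < α := lt_trans one_pos hα1
  have hαL : α * L^2 < r' := by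
    rw [hαdef]
    have h1 : (1 + r'/L^2)/2 * L^2 = (L^2 + r')/2 := by field_simp
    rw [h1]; linarith
  obtain ⟨T, hT⟩ : ∃ T : ℝ, T = α^2 * (π/2) * t₂ / t₁ := ⟨_, rfl⟩
  have hTgt : π/2 < T := by
    rw [hT, lt_div_iff₀ ht₁]
    have h1 : 1 < α^2 := by nlinarith
    have h2 : t₂ < α^2 * t₂ := by nlinarith
    nlinarith [mul_lt_mul_of_pos_left (lt_trans ht₁₂ h2) (by positivity : (0:ℝ) < π/2)]
  have hT0 : 0 < T := lt_trans (by positivity) hTgt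
  have hcpos : 0 < Real.cos (π/(2*L)) := by
    apply cos_pos_of_mem_Ioo
    constructor
    · have : 0 < π/(2*L) := by positivity
      linarith
    · rw [div_lt_div_iff₀ (by linarith) (by norm_num : (0:ℝ) < 2)]
      nlinarith
  obtain ⟨δ, hδdef⟩ : ∃ δ : ℝ, δ = min (π/4) (Real.cos (π/(2*L))^2/(T+1)) := ⟨_, rfl⟩
  have hδ0 : 0 < δ := by rw [hδdef]; exact lt_min (by linarith) (by positivity)
  have hδπ : δ ≤ π/4 := by rw [hδdef]; exact min_le_left _ _
  have hb0 : (0:ℝ) ≤ π/2 - δ := by linarith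
  have hbπ : π/2 - δ < π/2 := by linarith
  have hJb : T ≤ JJ L (π/2 - δ) := by
    have h1 := JJ_lb hL hδ0 hδπ
    have h2 : T + 1 ≤ Real.cos (π/(2*L))^2/δ := by
      have hδle : δ ≤ Real.cos (π/(2*L))^2/(T+1) := by rw [hδdef]; exact min_le_right _ _
      rw [le_div_iff₀ hδ0]
      calc (T+1) * δ ≤ (T+1) * (Real.cos (π/(2*L))^2/(T+1)) :=
            mul_le_mul_of_nonneg_left hδle (by linarith)
        _ = Real.cos (π/(2*L))^2 := by field_simp
    linarith
  have hmem : T ∈ Icc (JJ L 0) (JJ L (π/2 - δ)) := by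
    rw [JJ_zero]; exact ⟨hTgt.le, hJb⟩
  obtain ⟨x₀, hx₀mem, hx₀T⟩ := intermediate_value_Icc hb0 (JJ_cont hL hbπ) hmem
  have hx₀pos : 0 < x₀ := by
    rcases lt_or_eq_of_le hx₀mem.1 with h | h
    · exact h
    · exfalso; rw [← h, JJ_zero] at hx₀T; linarith
  have hx₀Ioo : x₀ ∈ Ioo 0 (π/2) := ⟨hx₀pos, lt_of_le_of_lt hx₀mem.2 hbπ⟩
  obtain ⟨ε, hεdef⟩ : ∃ ε : ℝ, ε = Real.cos x₀ / Real.cos (x₀/L) := ⟨_, rfl⟩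
  have hε : ε = Real.cos x₀ / Real.cos (x₀ / L) := hεdef
  have hεpos : 0 < ε := eps_pos hL hx₀Ioo hε
  have hεlt : ε < 1 := eps_lt_one hL hx₀Ioo hε
  obtain ⟨A, hAdef⟩ : ∃ A : ℝ, A = Real.sqrt (t₂ / T) := ⟨_, rfl⟩
  have hA2 : A^2 = t₂/T := by rw [hAdef]; exact Real.sq_sqrt (by positivity)
  have hA0 : 0 < A := by rw [hAdef]; exact Real.sqrt_pos.2 (by positivity)
  refine ⟨α, A, L, ε, hα1, hA0, hL, hεpos, hεlt, ?_⟩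
  intro ℓ w hℓw hww
  subst hℓw; subst hww
  rw [show (fun x : ℝ => A * min (Real.cos (x / L)) ((1 / ε) * Real.cos x))
      = (fun x : ℝ => A * Wf L ε x) from rfl]
  have hdl : (deriv fun x : ℝ => A * α * Real.cos x) = fun x => A * α * deriv Real.cos x :=
    deriv_const_mul_field' (A * α)
  have hdl2 : (deriv fun x : ℝ => A * α * Real.cos x) = fun x => -(A * α * Real.sin x) := by
    rw [hdl]; funext y; rw [Real.deriv_cos]; ring
  have hd2l : ∀ x : ℝ, deriv (deriv fun x : ℝ => A * α * Real.cos x) x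
      = -(A * α * Real.cos x) := by
    intro x
    rw [hdl2]
    exact (((Real.hasDerivAt_sin x).const_mul (A*α)).neg).deriv
  have hdw1 : (deriv fun x : ℝ => A * Wf L ε x) = fun x => A * deriv (Wf L ε) x :=
    deriv_const_mul_field' A
  have hd2w : ∀ x : ℝ, deriv (deriv fun x : ℝ => A * Wf L ε x) x
      = A * deriv (deriv (Wf L ε)) x := by
    intro x
    rw [hdw1]
    exact congrFun (deriv_const_mul_field' A) x
  refine ⟨⟨?_, ?_⟩, ⟨by simp, by simp, ?_, ?_⟩, ?_, ?_⟩
  · -- ℓ integral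
    have hcongr : (∫ x in (-(π/2))..(π/2), (deriv (fun x : ℝ => A * α * Real.cos x) x)^2)
        = ∫ x in (-(π/2))..(π/2), ((A*α) * Real.sin (x/1))^2 := by
      apply intervalIntegral.integral_congr
      intro x _
      show (deriv (fun x : ℝ => A * α * Real.cos x) x)^2 = ((A*α) * Real.sin (x/1))^2
      rw [hdl2]
      simp only [div_one]
      ring
    rw [hcongr, integral_aux (A*α) 1 (-(π/2)) (π/2) one_ne_zero]
    simp only [div_one, Real.sin_pi_div_two, Real.cos_pi_div_two, Real.sin_neg, Real.cos_neg,
      mul_zero, sub_zero, neg_mul, neg_zero]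
    rw [mul_pow, hA2, hT]
    field_simp
    ring
  · -- w integral
    have hcongr : (∫ x in (-(π/2))..(π/2),
          (deriv (fun x : ℝ => A * Wf L ε x) x)^2)
        = ∫ x in (-(π/2))..(π/2), A^2 * (deriv (Wf L ε) x)^2 := by
      apply intervalIntegral.integral_congr
      intro x _
      show (deriv (fun x : ℝ => A * Wf L ε x) x)^2 = A^2 * (deriv (Wf L ε) x)^2
      rw [hdw1]
      ring
    rw [hcongr, intervalIntegral.integral_const_mul, W_integral hL hx₀Ioo hε, hx₀T, hA2]
    field_simp
  · -- w (-(π/2)) = 0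
    show A * min (Real.cos (-(π/2) / L)) ((1/ε) * Real.cos (-(π/2))) = 0
    rw [Real.cos_neg, Real.cos_pi_div_two, mul_zero, neg_div, Real.cos_neg]
    rw [min_eq_right]
    · ring
    · rw [div_div] at *
      exact le_of_lt (by rw [← div_div]; rw [div_div]; exact hcpos)
  · -- w (π/2) = 0
    show A * min (Real.cos ((π/2) / L)) ((1/ε) * Real.cos (π/2)) = 0
    rw [Real.cos_pi_div_two, mul_zero]
    rw [min_eq_right]
    · ring
    · rw [div_div]
      exact hcpos.le
  · -- (iii)
    intro x hx hdiffw _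
    rw [hd2l x, hd2w x]
    have hcosx : 0 < Real.cos x := Real.cos_pos_of_mem_Ioo hx
    have habs : |x| < π/2 := abs_lt.2 ⟨by linarith [hx.1], hx.2⟩
    have hxLabs : |x/L| ≤ |x| := by
      rw [abs_div, abs_of_pos hL0]
      exact div_le_self (abs_nonneg x) hL.le
    have hcxL : 0 < Real.cos (x/L) := by
      apply Real.cos_pos_of_mem_Ioo
      have := abs_lt.1 (lt_of_le_of_lt hxLabs habs)
      exact ⟨this.1, this.2⟩
    have hcle : Real.cos x ≤ Real.cos (x/L) := by
      rw [← Real.cos_abs x, ← Real.cos_abs (x/L)]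
      exact Real.cos_le_cos_of_nonneg_of_le_pi (abs_nonneg _) (by linarith [habs]) hxLabs
    rcases lt_trichotomy |x| x₀ with hlt | heq | hgt
    · -- region 1
      rw [W_deriv2nd1 hL hx₀Ioo hε x hlt]
      rcases eq_or_lt_of_le hM1 with h0 | hM1pos
      · have hM2pos : 0 < M t₂ := lt_of_le_of_lt (le_of_eq h0) hMt
        have hpos : 0 < M t₂ * (A * (Real.cos (x/L)/L^2)) := by positivity
        rw [← h0]
        nlinarith only [hpos]
      · have key : M t₁ * α * L^2 < M t₂ := by
          have h1 : M t₁ * (α * L^2) < M t₁ * r' :=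
            mul_lt_mul_of_pos_left hαL hM1pos
          linarith only [h1, hMr']
        have step1 : M t₁ * (A * α * Real.cos x) ≤ M t₁ * (A * α * Real.cos (x/L)) := by
          apply mul_le_mul_of_nonneg_left _ hM1
          exact mul_le_mul_of_nonneg_left hcle (mul_pos hA0 hα0).le
        have step2 : M t₁ * (A * α * Real.cos (x/L)) < M t₂ * (A * (Real.cos (x/L)/L^2)) := by
          have e : M t₂ * (A * (Real.cos (x/L)/L^2)) = M t₂ * A * Real.cos (x/L) / L^2 := by
            ring
          rw [e, lt_div_iff₀ hL2pos]
          nlinarith only [mul_lt_mul_of_pos_right key (mul_pos hA0 hcxL)]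
        nlinarith only [lt_of_le_of_lt step1 step2]
    · -- crossing point: contradiction
      exfalso
      have hWdiff : DifferentiableAt ℝ (Wf L ε) x := by
        have h2 : DifferentiableAt ℝ (fun y => (1/A) *
            (A * Wf L ε y)) x := hdiffw.const_mul (1/A)
        have h3 : (fun y => (1/A) * (A * Wf L ε y))
            = Wf L ε := by
          funext y
          show (1/A) * (A * Wf L ε y) = Wf L ε y
          field_simp
        rwa [h3] at h2
      rcases (abs_eq hx₀pos.le).1 heq with h | h
      · exact W_not_diff hL hx₀Ioo hε (h ▸ hWdiff)
      · exact W_not_diff_neg hL hx₀Ioo hε (h ▸ hWdiff)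
    · -- region 2
      rw [W_deriv2nd2 hL hx₀Ioo hε x hgt habs]
      rcases eq_or_lt_of_le hM1 with h0 | hM1pos
      · have hM2pos : 0 < M t₂ := lt_of_le_of_lt (le_of_eq h0) hMt
        have hpos : 0 < M t₂ * (A * ((1/ε) * Real.cos x)) := by positivity
        rw [← h0]
        nlinarith only [hpos]
      · have hM2pos : 0 < M t₂ := lt_trans hM1pos hMt
        have key : M t₁ * α * L^2 < M t₂ := by
          have h1 : M t₁ * (α * L^2) < M t₁ * r' :=
            mul_lt_mul_of_pos_left hαL hM1pos
          linarith only [h1, hMr']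
        have key2 : M t₁ * α < M t₂ * (1/ε) := by
          have h1 : M t₁ * α < M t₁ * α * L^2 := by
            have h0 : 0 < M t₁ * α * (L^2 - 1) :=
              mul_pos (mul_pos hM1pos hα0) (sub_pos.2 hL2gt1)
            nlinarith only [h0]
          have h2 : M t₂ < M t₂ * (1/ε) := by
            have h3 := mul_lt_mul_of_pos_left (one_lt_one_div hεpos hεlt) hM2pos
            nlinarith only [h3]
          linarith only [h1, h2, key]
        have final2 : M t₁ * (A * α * Real.cos x) < M t₂ * (A * ((1/ε) * Real.cos x)) := by
          nlinarith only [mul_lt_mul_of_pos_right key2 (mul_pos hA0 hcosx)]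
        nlinarith only [final2]
  · -- (iv)
    show A * Wf L ε 0 < A * α * Real.cos 0
    rw [show Wf L ε 0 = min (Real.cos (0 / L)) ((1/ε) * Real.cos 0) from rfl]
    rw [Real.cos_zero, zero_div, Real.cos_zero, mul_one, mul_one]
    have h1e : (1:ℝ) ≤ 1/ε := (le_div_iff₀ hεpos).2 (by linarith)
    rw [min_eq_left h1e]
    nlinarith only [mul_pos hA0 (sub_pos.2 hα1)]
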